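/- A play in the support arena is realisable (i.e., is the projection of a play of the m-population game for some finite m) if and only if it has bounded capacity (i.e., there is a uniform bound on the number of entries over all its accumulators). -/

import Mathlib

variable {Q A : Type}

/-- The NFA transition relation is complete. -/
def Complete (Δ : Q → A → Q → Prop) : Prop := ∀ q a, ∃ p, Δ q a p

/-- Domain of a transfer graph. -/
def dom (G : Set (Q × Q)) : Set Q := {q | ∃ r, (q, r) ∈ G}

/-- Image of a transfer graph. -/
def im (G : Set (Q × Q)) : Set Q := {r | ∃ q, (q, r) ∈ G}

/-- An (infinite) play in the support arena: `G n` is the transfer graph used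
between the supports `S n` and `S (n+1)`, compatible with the letter `act n`. -/
structure SupportPlay (Δ : Q → A → Q → Prop) (q0 : Q) where
  S : ℕ → Set Q
  act : ℕ → A
  G : ℕ → Set (Q × Q)
  init : S 0 = {q0}
  compat : ∀ n, ∀ p ∈ G n, Δ p.1 (act n) p.2
  hdom : ∀ n, dom (G n) = S n
  him : ∀ n, im (G n) = S (n + 1)

/-- A play of the m-population game: all agents start in q0, and at each step every
agent follows a transition labelled by the common letter. -/
def IsPopPlay (Δ : Q → A → Q → Prop) (q0 : Q) {m : ℕ}
    (ρ : ℕ → Fin m → Q) (acts : ℕ → A) : Prop :=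
  ρ 0 = (fun _ => q0) ∧ ∀ n j, Δ (ρ n j) (acts n) (ρ (n + 1) j)

/-- The play of the m-population game `(ρ, acts)` projects onto the support-arena
play `P`: supports are the sets of occupied states, transfer graphs the agent-used edges. -/
def ProjectsTo {Δ : Q → A → Q → Prop} {q0 : Q} {m : ℕ}
    (ρ : ℕ → Fin m → Q) (acts : ℕ → A) (P : SupportPlay Δ q0) : Prop :=
  (∀ n, P.S n = {q | ∃ j, ρ n j = q}) ∧
  (∀ n, P.act n = acts n) ∧
  (∀ n, P.G n = {p | ∃ j, ρ n j = p.1 ∧ ρ (n + 1) j = p.2})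

/-- A support-arena play is realisable if it is the projection of a play of the
m-population game for some finite m. -/
def Realisable {Δ : Q → A → Q → Prop} {q0 : Q} (P : SupportPlay Δ q0) : Prop :=
  ∃ (m : ℕ) (ρ : ℕ → Fin m → Q) (acts : ℕ → A),
    IsPopPlay Δ q0 ρ acts ∧ ProjectsTo ρ acts P

/-- An accumulator: a successor-closed sequence of subsets of the supports. -/
def IsAccumulator (S : ℕ → Set Q) (G : ℕ → Set (Q × Q)) (T : ℕ → Set Q) : Prop :=
  (∀ j, T j ⊆ S j) ∧ ∀ j s t, s ∈ T j → (s, t) ∈ G j → t ∈ T (j + 1)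

/-- The entries of an accumulator: edges entering the accumulator from outside. -/
def Entries (G : ℕ → Set (Q × Q)) (T : ℕ → Set Q) : Set (ℕ × Q × Q) :=
  {e | (e.2.1, e.2.2) ∈ G e.1 ∧ e.2.1 ∉ T e.1 ∧ e.2.2 ∈ T (e.1 + 1)}

/-- A play has bounded capacity if the number of entries of its accumulators is
uniformly bounded. -/
def BoundedCapacity {Δ : Q → A → Q → Prop} {q0 : Q} (P : SupportPlay Δ q0) : Prop :=
  ∃ B : ℕ, ∀ T, IsAccumulator P.S P.G T → (Entries P.G T).encard ≤ B

-- Direction 1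
theorem realisable_boundedCapacity {Δ : Q → A → Q → Prop} {q0 : Q}
    (P : SupportPlay Δ q0) (h : Realisable P) : BoundedCapacity P := by
  obtain ⟨m, ρ, acts, hpop, hS, hact, hG⟩ := h
  refine ⟨m, fun T hT => ?_⟩
  classical
  -- every agent that is in T stays in T
  have hstay : ∀ (i : Fin m) (k : ℕ), ρ k i ∈ T k → ρ (k+1) i ∈ T (k+1) := by
    intro i k hk
    refine hT.2 k _ _ hk ?_
    rw [hG k]; exact ⟨i, rfl, rfl⟩
  have hstay' : ∀ (i : Fin m) (k k' : ℕ), k ≤ k' → ρ k i ∈ T k → ρ k' i ∈ T k' := by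
    intro i k k' hkk'
    induction k' , hkk' using Nat.le_induction with
    | base => exact id
    | succ n hn ih => intro h; exact hstay i n (ih h)
  -- choose a witness agent for each entry
  have hw : ∀ e ∈ Entries P.G T, ∃ i : Fin m, ρ e.1 i = e.2.1 ∧ ρ (e.1+1) i = e.2.2 := by
    intro e he
    have := he.1
    rw [hG e.1] at this
    exact this
  choose f hf using hw
  have hinj : Set.InjOn (fun e : ℕ × Q × Q => if h : e ∈ Entries P.G T then f e h else
      Classical.choice (by
        have : q0 ∈ P.S 0 := by rw [P.init]; rfl
        rw [hS 0] at this
        exact ⟨this.choose⟩)) (Entries P.G T) := by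
    intro e he e' he' heq
    simp only [dif_pos he, dif_pos he'] at heq
    obtain ⟨h1, h2⟩ := hf e he
    obtain ⟨h1', h2'⟩ := hf e' he'
    rw [heq] at h1 h2
    -- show e.1 = e'.1
    have htime : e.1 = e'.1 := by
      by_contra hne
      rcases Nat.lt_or_ge e.1 e'.1 with hlt | hge
      · -- agent is in T at time e.1+1, stays, contradicts e'.2.1 ∉ T e'.1
        have : ρ e'.1 (f e' he') ∈ T e'.1 := by
          rw [← heq] at h2 ⊢
          exact hstay' _ _ _ hlt (h2 ▸ he.2.2)
        rw [h1'] at this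
        exact he'.2.1 this
      · have hlt : e'.1 < e.1 := lt_of_le_of_ne hge (fun hh => hne hh.symm)
        have : ρ e.1 (f e' he') ∈ T e.1 := hstay' _ _ _ hlt (h2' ▸ he'.2.2)
        rw [h1] at this
        exact he.2.1 this
    have : e.2 = e'.2 := by
      rw [htime] at h1 h2
      rw [h1] at h1'; rw [h2] at h2'
      exact Prod.ext h1' h2'
    exact Prod.ext htime this
  calc (Entries P.G T).encard
      = ((fun e : ℕ × Q × Q => if h : e ∈ Entries P.G T then f e h else _) ''
          (Entries P.G T)).encard := (hinj.encard_image).symm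
    _ ≤ (Set.univ : Set (Fin m)).encard := Set.encard_mono (Set.subset_univ _)
    _ ≤ m := by rw [Set.encard_univ]; simp

section Hard
open Finset
open scoped Classical

variable {Δ : Q → A → Q → Prop} {q0 : Q} (P : SupportPlay Δ q0)

lemma mem_S_dom {q : Q} {n : ℕ} : q ∈ P.S n ↔ ∃ t, (q, t) ∈ P.G n := by
  rw [← P.hdom n]; rfl

lemma mem_S_im {q : Q} {n : ℕ} : q ∈ P.S (n+1) ↔ ∃ s, (s, q) ∈ P.G n := by
  rw [← P.him n]; rfl

lemma edge_left {s t : Q} {n : ℕ} (h : (s,t) ∈ P.G n) : s ∈ P.S n :=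
  (mem_S_dom P).2 ⟨t, h⟩

lemma edge_right {s t : Q} {n : ℕ} (h : (s,t) ∈ P.G n) : t ∈ P.S (n+1) :=
  (mem_S_im P).2 ⟨s, h⟩

/-- successor choice -/
noncomputable def sc (n : ℕ) (q : Q) : Q :=
  if h : q ∈ P.S n then ((mem_S_dom P).1 h).choose else q

lemma sc_spec {n : ℕ} {q : Q} (h : q ∈ P.S n) : (q, sc P n q) ∈ P.G n := by
  rw [sc, dif_pos h]; exact ((mem_S_dom P).1 h).choose_spec

/-- predecessor choice -/
noncomputable def pc (n : ℕ) (q : Q) : Q :=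
  if h : q ∈ P.S (n+1) then ((mem_S_im P).1 h).choose else q

lemma pc_spec {n : ℕ} {q : Q} (h : q ∈ P.S (n+1)) : (pc P n q, q) ∈ P.G n := by
  rw [pc, dif_pos h]; exact ((mem_S_im P).1 h).choose_spec

/-- forward chain: state at time k+i starting from t at time k -/
noncomputable def fw (k : ℕ) (t : Q) : ℕ → Q
  | 0 => t
  | (i+1) => sc P (k+i) (fw k t i)

lemma fw_mem {k : ℕ} {t : Q} (ht : t ∈ P.S k) : ∀ i, fw P k t i ∈ P.S (k+i)
  | 0 => ht
  | (i+1) => edge_right P (sc_spec P (fw_mem ht i))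

lemma fw_step {k : ℕ} {t : Q} (ht : t ∈ P.S k) (i : ℕ) :
    (fw P k t i, fw P k t (i+1)) ∈ P.G (k+i) := sc_spec P (fw_mem P ht i)

/-- backward chain: state at time j - i starting from q at time j -/
noncomputable def back (j : ℕ) (q : Q) : ℕ → Q
  | 0 => q
  | (i+1) => pc P (j - (i+1)) (back j q i)

lemma back_mem {j : ℕ} {q : Q} (hq : q ∈ P.S j) : ∀ i, i ≤ j → back P j q i ∈ P.S (j - i) := by
  intro i
  induction i with
  | zero => intro _; simpa [back] using hq
  | succ i ih =>
    intro hij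
    have h1 : back P j q i ∈ P.S (j - i) := ih (Nat.le_of_succ_le hij)
    have h2 : j - i = (j - (i+1)) + 1 := by omega
    rw [h2] at h1
    exact edge_left P (pc_spec P h1)

lemma back_step {j : ℕ} {q : Q} (hq : q ∈ P.S j) (i : ℕ) (hij : i + 1 ≤ j) :
    (back P j q (i+1), back P j q i) ∈ P.G (j - (i+1)) := by
  have h1 : back P j q i ∈ P.S (j - i) := back_mem P hq i (Nat.le_of_succ_le hij)
  have h2 : j - i = (j - (i+1)) + 1 := by omega
  rw [h2] at h1
  exact pc_spec P h1

/-- full trajectory through the edge `e` -/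
noncomputable def traj (e : ℕ × Q × Q) (k : ℕ) : Q :=
  if k ≤ e.1 then back P e.1 e.2.1 (e.1 - k) else fw P (e.1+1) e.2.2 (k - (e.1+1))

variable {e : ℕ × Q × Q}

lemma traj_src (he : (e.2.1, e.2.2) ∈ P.G e.1) : traj P e e.1 = e.2.1 := by
  rw [traj, if_pos le_rfl]; simp [back]

lemma traj_tgt (he : (e.2.1, e.2.2) ∈ P.G e.1) : traj P e (e.1+1) = e.2.2 := by
  rw [traj, if_neg (by omega)]; simp [fw]

lemma traj_zero (he : (e.2.1, e.2.2) ∈ P.G e.1) : traj P e 0 = q0 := by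
  rw [traj, if_pos (Nat.zero_le _)]
  have := back_mem P (edge_left P he) e.1 le_rfl
  simp only [Nat.sub_zero, Nat.sub_self] at this ⊢
  rw [P.init] at this
  exact this

lemma traj_step (he : (e.2.1, e.2.2) ∈ P.G e.1) (k : ℕ) :
    (traj P e k, traj P e (k+1)) ∈ P.G k := by
  rcases Nat.lt_trichotomy (k+1) (e.1+1) with h | h | h
  · -- k+1 ≤ e.1
    have hk1 : k + 1 ≤ e.1 := by omega
    rw [traj, if_pos (by omega), traj, if_pos hk1]
    have h2 : e.1 - k = (e.1 - (k+1)) + 1 := by omega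
    rw [h2]
    have := back_step P (edge_left P he) (e.1 - (k+1)) (by omega)
    have h3 : e.1 - (e.1 - (k + 1) + 1) = k := by omega
    rwa [h3] at this
  · -- k = e.1
    have hk : k = e.1 := by omega
    subst hk
    rw [traj_src P he, traj_tgt P he]
    exact he
  · -- k > e.1
    rw [traj, if_neg (by omega), traj, if_neg (by omega)]
    have := fw_step P (edge_right P he) (k - (e.1+1))
    have h2 : e.1 + 1 + (k - (e.1+1)) = k := by omega
    rw [h2] at this
    have h3 : k + 1 - (e.1 + 1) = (k - (e.1+1)) + 1 := by omega
    rw [h3]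
    exact this


/-! ### Flows -/

variable [Fintype Q]

def outF (F : ℕ × Q × Q → ℕ) (j : ℕ) (q : Q) : ℕ := ∑ t, F (j,q,t)
def inF (F : ℕ × Q × Q → ℕ) (j : ℕ) (q : Q) : ℕ := ∑ s, F (j,s,q)

/-- A flow of value `m` on the horizon `n` (layers `0,…,n-1`). -/
def HFlowTo (n m : ℕ) (F : ℕ × Q × Q → ℕ) : Prop :=
  (∀ j, j < n → ∀ q t, (0 < F (j,q,t) → (q,t) ∈ P.G j) ∧ ((q,t) ∈ P.G j → 1 ≤ F (j,q,t))) ∧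
  (∀ q, outF F 0 q = if q = q0 then m else 0) ∧
  (∀ j, j + 1 < n → ∀ q, outF F (j+1) q = inF F j q)

/-- all edges up to time n -/
noncomputable def EdgN (n : ℕ) : Finset (ℕ × Q × Q) :=
  (Finset.range n ×ˢ (Finset.univ : Finset (Q × Q))).filter (fun e => (e.2.1, e.2.2) ∈ P.G e.1)

lemma mem_EdgN {n : ℕ} {e : ℕ × Q × Q} :
    e ∈ EdgN P n ↔ e.1 < n ∧ (e.2.1, e.2.2) ∈ P.G e.1 := by
  simp [EdgN, Finset.mem_filter, Finset.mem_product]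

lemma sum_card_fiber {ι : Type} (s : Finset ι) (g h : ι → Q) (q : Q) :
    ∑ t : Q, (s.filter fun e => g e = q ∧ h e = t).card = (s.filter fun e => g e = q).card := by
  have key := Finset.card_eq_sum_card_fiberwise (s := s.filter fun e => g e = q) (f := h)
    (t := (Finset.univ : Finset Q)) (fun x _ => Finset.mem_univ _)
  rw [key]
  apply Finset.sum_congr rfl
  intro t _
  rw [Finset.filter_filter]

/-- the trajectory-sum flow -/
noncomputable def FeasF (n : ℕ) : ℕ × Q × Q → ℕ :=
  fun x => ((EdgN P n).filter (fun e => traj P e x.1 = x.2.1 ∧ traj P e (x.1+1) = x.2.2)).card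

lemma outF_traj_count (n j : ℕ) (q : Q) :
    outF (FeasF P n) j q = ((EdgN P n).filter (fun e => traj P e j = q)).card := by
  rw [outF]
  simp only [FeasF]
  exact sum_card_fiber (EdgN P n) (fun e => traj P e j) (fun e => traj P e (j+1)) q

lemma inF_traj_count (n j : ℕ) (q : Q) :
    inF (FeasF P n) j q = ((EdgN P n).filter (fun e => traj P e (j+1) = q)).card := by
  rw [inF]
  rw [← sum_card_fiber (EdgN P n) (fun e => traj P e (j+1)) (fun e => traj P e j) q]
  apply Finset.sum_congr rfl
  intro s _
  rw [FeasF]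
  congr 1
  apply Finset.filter_congr
  intro e _
  simp only [eq_iff_iff]
  exact and_comm

lemma feas_exists (n : ℕ) : ∃ m F, HFlowTo P n m F := by
  refine ⟨(EdgN P n).card, FeasF P n, ?_, ?_, ?_⟩
  · intro j hj q t
    constructor
    · intro hpos
      rw [FeasF] at hpos
      obtain ⟨e, he⟩ := Finset.card_pos.1 hpos
      rw [Finset.mem_filter] at he
      have hee := ((mem_EdgN P).1 he.1).2
      have := traj_step P hee j
      rwa [he.2.1, he.2.2] at this
    · intro hedge
      rw [FeasF]
      apply Finset.card_pos.2
      refine ⟨(j,q,t), ?_⟩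
      rw [Finset.mem_filter]
      refine ⟨(mem_EdgN P).2 ⟨hj, hedge⟩, ?_, ?_⟩
      · exact traj_src P hedge
      · exact traj_tgt P hedge
  · intro q
    rw [outF_traj_count]
    by_cases hq : q = q0
    · subst hq
      rw [if_pos rfl]
      congr 1
      apply Finset.filter_true_of_mem
      intro e he
      exact traj_zero P ((mem_EdgN P).1 he).2
    · rw [if_neg hq]
      rw [Finset.card_eq_zero]
      apply Finset.filter_false_of_mem
      intro e he h
      exact hq (h ▸ (traj_zero P ((mem_EdgN P).1 he).2).symm ▸ rfl)
  · intro j _ q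
    rw [outF_traj_count, inF_traj_count]

/-! ### modifying a flow at one edge -/

noncomputable def dec (e : ℕ × Q × Q) (F : ℕ × Q × Q → ℕ) : ℕ × Q × Q → ℕ :=
  fun x => if x = e then F x - 1 else F x

noncomputable def inc (e : ℕ × Q × Q) (F : ℕ × Q × Q → ℕ) : ℕ × Q × Q → ℕ :=
  fun x => if x = e then F x + 1 else F x

variable {j : ℕ} {q t : Q} {F : ℕ × Q × Q → ℕ}



lemma row_split (f : Q → ℕ) (t : Q) :
    ∑ t', f t' = f t + ∑ t' ∈ Finset.univ.erase t, f t' :=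
  (Finset.add_sum_erase Finset.univ f (Finset.mem_univ t)).symm

lemma outF_dec_same (F : ℕ × Q × Q → ℕ) (j : ℕ) (q t : Q) (hF : 1 ≤ F (j,q,t)) :
    outF (dec (j,q,t) F) j q = outF F j q - 1 := by
  rw [outF, outF, row_split (fun t' => dec (j,q,t) F (j,q,t')) t, row_split (fun t' => F (j,q,t')) t]
  have h1 : dec (j,q,t) F (j,q,t) = F (j,q,t) - 1 := by rw [dec, if_pos rfl]
  have h2 : ∑ t' ∈ Finset.univ.erase t, dec (j,q,t) F (j,q,t') = ∑ t' ∈ Finset.univ.erase t, F (j,q,t') := by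
    apply Finset.sum_congr rfl
    intro t' ht'
    rw [dec, if_neg]
    simp only [Prod.mk.injEq]
    intro h
    exact (Finset.mem_erase.1 ht').1 h.2.2
  rw [h1, h2]
  have h3 : F (j,q,t) ≤ F (j,q,t) := le_rfl
  omega

lemma outF_dec_other (e : ℕ × Q × Q) (F : ℕ × Q × Q → ℕ) (j : ℕ) (q : Q)
    (h : ¬ (e.1 = j ∧ e.2.1 = q)) : outF (dec e F) j q = outF F j q := by
  rw [outF, outF]
  apply Finset.sum_congr rfl
  intro t' _
  rw [dec, if_neg]
  intro hh
  exact h ⟨by rw [← hh], by rw [← hh]⟩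

lemma inF_dec_same (F : ℕ × Q × Q → ℕ) (j : ℕ) (q t : Q) (hF : 1 ≤ F (j,q,t)) :
    inF (dec (j,q,t) F) j t = inF F j t - 1 := by
  rw [inF, inF, row_split (fun s => dec (j,q,t) F (j,s,t)) q, row_split (fun s => F (j,s,t)) q]
  have h1 : dec (j,q,t) F (j,q,t) = F (j,q,t) - 1 := by rw [dec, if_pos rfl]
  have h2 : ∑ s ∈ Finset.univ.erase q, dec (j,q,t) F (j,s,t) = ∑ s ∈ Finset.univ.erase q, F (j,s,t) := by
    apply Finset.sum_congr rfl
    intro s hs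
    rw [dec, if_neg]
    simp only [Prod.mk.injEq]
    intro h
    exact (Finset.mem_erase.1 hs).1 h.2.1
  rw [h1, h2]
  omega

lemma inF_dec_other (e : ℕ × Q × Q) (F : ℕ × Q × Q → ℕ) (j : ℕ) (q : Q)
    (h : ¬ (e.1 = j ∧ e.2.2 = q)) : inF (dec e F) j q = inF F j q := by
  rw [inF, inF]
  apply Finset.sum_congr rfl
  intro s _
  rw [dec, if_neg]
  intro hh
  exact h ⟨by rw [← hh], by rw [← hh]⟩

lemma outF_inc_same (F : ℕ × Q × Q → ℕ) (j : ℕ) (q t : Q) :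
    outF (inc (j,q,t) F) j q = outF F j q + 1 := by
  rw [outF, outF, row_split (fun t' => inc (j,q,t) F (j,q,t')) t, row_split (fun t' => F (j,q,t')) t]
  have h1 : inc (j,q,t) F (j,q,t) = F (j,q,t) + 1 := by rw [inc, if_pos rfl]
  have h2 : ∑ t' ∈ Finset.univ.erase t, inc (j,q,t) F (j,q,t') = ∑ t' ∈ Finset.univ.erase t, F (j,q,t') := by
    apply Finset.sum_congr rfl
    intro t' ht'
    rw [inc, if_neg]
    simp only [Prod.mk.injEq]
    intro h
    exact (Finset.mem_erase.1 ht').1 h.2.2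
  rw [h1, h2]
  omega

lemma outF_inc_other (e : ℕ × Q × Q) (F : ℕ × Q × Q → ℕ) (j : ℕ) (q : Q)
    (h : ¬ (e.1 = j ∧ e.2.1 = q)) : outF (inc e F) j q = outF F j q := by
  rw [outF, outF]
  apply Finset.sum_congr rfl
  intro t' _
  rw [inc, if_neg]
  intro hh
  exact h ⟨by rw [← hh], by rw [← hh]⟩

lemma inF_inc_same (F : ℕ × Q × Q → ℕ) (j : ℕ) (q t : Q) :
    inF (inc (j,q,t) F) j t = inF F j t + 1 := by
  rw [inF, inF, row_split (fun s => inc (j,q,t) F (j,s,t)) q, row_split (fun s => F (j,s,t)) q]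
  have h1 : inc (j,q,t) F (j,q,t) = F (j,q,t) + 1 := by rw [inc, if_pos rfl]
  have h2 : ∑ s ∈ Finset.univ.erase q, inc (j,q,t) F (j,s,t) = ∑ s ∈ Finset.univ.erase q, F (j,s,t) := by
    apply Finset.sum_congr rfl
    intro s hs
    rw [inc, if_neg]
    simp only [Prod.mk.injEq]
    intro h
    exact (Finset.mem_erase.1 hs).1 h.2.1
  rw [h1, h2]
  omega

lemma inF_inc_other (e : ℕ × Q × Q) (F : ℕ × Q × Q → ℕ) (j : ℕ) (q : Q)
    (h : ¬ (e.1 = j ∧ e.2.2 = q)) : inF (inc e F) j q = inF F j q := by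
  rw [inF, inF]
  apply Finset.sum_congr rfl
  intro s _
  rw [inc, if_neg]
  intro hh
  exact h ⟨by rw [← hh], by rw [← hh]⟩

lemma le_inF (F : ℕ × Q × Q → ℕ) (j : ℕ) (q t : Q) : F (j,q,t) ≤ inF F j t :=
  Finset.single_le_sum (f := fun s => F (j,s,t)) (fun _ _ => Nat.zero_le _) (Finset.mem_univ q)

lemma le_outF (F : ℕ × Q × Q → ℕ) (j : ℕ) (q t : Q) : F (j,q,t) ≤ outF F j q :=
  Finset.single_le_sum (f := fun t' => F (j,q,t')) (fun _ _ => Nat.zero_le _) (Finset.mem_univ t)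

/-! ### deficit flows -/

def DFlow (n m : ℕ) (v : ℕ × Q) (F : ℕ × Q × Q → ℕ) : Prop :=
  (∀ j, j < n → ∀ q t, (0 < F (j,q,t) → (q,t) ∈ P.G j) ∧ ((q,t) ∈ P.G j → 1 ≤ F (j,q,t))) ∧
  (∀ q, outF F 0 q = (if q = q0 then m else 0) + (if v = (0,q) then 1 else 0)) ∧
  (∀ j, j + 1 < n → ∀ q, outF F (j+1) q = inF F j q + (if v = (j+1,q) then 1 else 0))

lemma pair_ne {a c : ℕ} {b d : Q} (h : ¬(a = c ∧ b = d)) : ((a,b) : ℕ × Q) ≠ (c,d) :=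
  fun hh => h ⟨congrArg Prod.fst hh, congrArg Prod.snd hh⟩

lemma pair_ne_fst {a c : ℕ} {b d : Q} (h : a ≠ c) : ((a,b) : ℕ × Q) ≠ (c,d) :=
  pair_ne (fun hh => h hh.1)

lemma hflow_dflow {n m : ℕ} {F : ℕ × Q × Q → ℕ} (hm : 1 ≤ m) (h : HFlowTo P n m F) :
    DFlow P n (m-1) (0,q0) F := by
  refine ⟨h.1, ?_, ?_⟩
  · intro q
    rw [h.2.1 q]
    by_cases hq : q = q0
    · subst hq; rw [if_pos rfl, if_pos rfl, if_pos rfl]; omega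
    · rw [if_neg hq, if_neg hq,
        if_neg (by intro hh; rw [Prod.ext_iff] at hh; exact hq hh.2.symm)]
  · intro j hj q
    rw [h.2.2 j hj q,
      if_neg (by intro hh; rw [Prod.ext_iff] at hh; omega), Nat.add_zero]

lemma dflow_hflow {n m : ℕ} {q' : Q} {F : ℕ × Q × Q → ℕ} (hn : 1 ≤ n)
    (h : DFlow P n m (n, q') F) : HFlowTo P n m F := by
  refine ⟨h.1, ?_, ?_⟩
  · intro q
    rw [h.2.1 q,
      if_neg (pair_ne_fst (by omega) : ((n:ℕ), q') ≠ ((0:ℕ), q)), Nat.add_zero]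
  · intro j hj q
    rw [h.2.2 j hj q,
      if_neg (pair_ne_fst (by omega) : ((n:ℕ), q') ≠ ((j+1:ℕ), q)), Nat.add_zero]

lemma dflow_fwd {n m : ℕ} {F : ℕ × Q × Q → ℕ} {j : ℕ} {q t : Q}
    (h : DFlow P n m (j,q) F) (hj : j < n) (ht : 2 ≤ F (j,q,t)) :
    DFlow P n m (j+1,t) (dec (j,q,t) F) := by
  obtain ⟨hsupp, h0, hcons⟩ := h
  refine ⟨?_, ?_, ?_⟩
  · intro j' hj' q' t'
    constructor
    · intro hpos
      apply (hsupp j' hj' q' t').1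
      have : dec (j,q,t) F (j',q',t') ≤ F (j',q',t') := by
        rw [dec]; split <;> omega
      omega
    · intro hedge
      have := (hsupp j' hj' q' t').2 hedge
      rw [dec]
      split
      · rename_i hh
        rw [hh]; omega
      · exact this
  · intro q'
    rw [if_neg (pair_ne_fst (by omega) : ((j+1:ℕ),t) ≠ ((0:ℕ),q')), Nat.add_zero]
    by_cases hc : j = 0 ∧ q = q'
    · obtain ⟨hc1, hc2⟩ := hc
      subst hc1; subst hc2
      rw [outF_dec_same F 0 q t (by omega), h0 q, if_pos rfl]
      omega
    · rw [outF_dec_other (j,q,t) F 0 q' hc, h0 q', if_neg (pair_ne hc), Nat.add_zero]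
  · intro j' hj' q'
    by_cases hA : j'+1 = j ∧ q' = q
    · obtain ⟨hA1, hA2⟩ := hA
      subst hA1; subst hA2
      rw [outF_dec_same F (j'+1) q' t (by omega),
        inF_dec_other (j'+1,q',t) F j' q' (fun hh => absurd hh.1 (by omega)),
        if_neg (pair_ne_fst (by omega) : ((j'+1+1:ℕ),t) ≠ ((j'+1:ℕ),q')), Nat.add_zero,
        hcons j' hj' q', if_pos rfl]
      omega
    · by_cases hB : j' = j ∧ q' = t
      · obtain ⟨hB1, hB2⟩ := hB
        subst hB1; subst hB2
        rw [outF_dec_other (j',q,q') F (j'+1) q' (fun hh => absurd hh.1 (by omega)),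
          inF_dec_same F j' q q' (by omega),
          if_pos rfl, hcons j' hj' q',
          if_neg (pair_ne_fst (by omega) : ((j':ℕ),q) ≠ ((j'+1:ℕ),q')), Nat.add_zero]
        have := le_inF F j' q q'
        omega
      · rw [outF_dec_other (j,q,t) F (j'+1) q' (fun hh => hA ⟨hh.1.symm, hh.2.symm⟩),
          inF_dec_other (j,q,t) F j' q' (fun hh => hB ⟨hh.1.symm, hh.2.symm⟩),
          hcons j' hj' q',
          if_neg (pair_ne (fun hh => hB ⟨by omega, hh.2.symm⟩) :
            ((j+1:ℕ),t) ≠ ((j'+1:ℕ),q')),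
          if_neg (pair_ne (fun hh => hA ⟨hh.1.symm, hh.2.symm⟩) :
            ((j:ℕ),q) ≠ ((j'+1:ℕ),q'))]

lemma dflow_bwd {n m : ℕ} {F : ℕ × Q × Q → ℕ} {j : ℕ} {q t : Q}
    (h : DFlow P n m (j+1,t) F) (hj : j + 1 ≤ n) (he : (q,t) ∈ P.G j) :
    DFlow P n m (j,q) (inc (j,q,t) F) := by
  obtain ⟨hsupp, h0, hcons⟩ := h
  refine ⟨?_, ?_, ?_⟩
  · intro j' hj' q' t'
    constructor
    · intro hpos
      by_cases hc : ((j' : ℕ),q',t') = ((j : ℕ),q,t)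
      · have h1 : j' = j := congrArg Prod.fst hc
        have h2 : q' = q := congrArg (fun x => x.2.1) hc
        have h3 : t' = t := congrArg (fun x => x.2.2) hc
        subst h1; subst h2; subst h3
        exact he
      · rw [inc, if_neg hc] at hpos
        exact (hsupp j' hj' q' t').1 hpos
    · intro hedge
      have := (hsupp j' hj' q' t').2 hedge
      rw [inc]
      split <;> omega
  · intro q'
    by_cases hc : j = 0 ∧ q = q'
    · obtain ⟨hc1, hc2⟩ := hc
      subst hc1; subst hc2
      rw [outF_inc_same F 0 q t, h0 q,
        if_neg (pair_ne_fst (by omega) : ((0+1:ℕ),t) ≠ ((0:ℕ),q)), Nat.add_zero,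
        if_pos rfl]
    · rw [outF_inc_other (j,q,t) F 0 q' hc, h0 q',
        if_neg (pair_ne_fst (by omega) : ((j+1:ℕ),t) ≠ ((0:ℕ),q')), Nat.add_zero,
        if_neg (pair_ne hc), Nat.add_zero]
  · intro j' hj' q'
    by_cases hA : j'+1 = j ∧ q' = q
    · obtain ⟨hA1, hA2⟩ := hA
      subst hA1; subst hA2
      rw [outF_inc_same F (j'+1) q' t,
        inF_inc_other (j'+1,q',t) F j' q' (fun hh => absurd hh.1 (by omega)),
        if_pos rfl, hcons j' hj' q',
        if_neg (pair_ne_fst (by omega) : ((j'+1+1:ℕ),t) ≠ ((j'+1:ℕ),q')), Nat.add_zero]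
    · by_cases hB : j' = j ∧ q' = t
      · obtain ⟨hB1, hB2⟩ := hB
        subst hB1; subst hB2
        rw [outF_inc_other (j',q,q') F (j'+1) q' (fun hh => absurd hh.1 (by omega)),
          inF_inc_same F j' q q',
          if_neg (pair_ne_fst (by omega) : ((j':ℕ),q) ≠ ((j'+1:ℕ),q')), Nat.add_zero,
          hcons j' hj' q', if_pos rfl]
      · rw [outF_inc_other (j,q,t) F (j'+1) q' (fun hh => hA ⟨hh.1.symm, hh.2.symm⟩),
          inF_inc_other (j,q,t) F j' q' (fun hh => hB ⟨hh.1.symm, hh.2.symm⟩),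
          hcons j' hj' q',
          if_neg (pair_ne (fun hh => hB ⟨by omega, hh.2.symm⟩) :
            ((j+1:ℕ),t) ≠ ((j'+1:ℕ),q')),
          if_neg (pair_ne (fun hh => hA ⟨hh.1.symm, hh.2.symm⟩) :
            ((j:ℕ),q) ≠ ((j'+1:ℕ),q'))]

/-! ### residual reachability -/

def Rres (n : ℕ) (F : ℕ × Q × Q → ℕ) (a b : ℕ × Q) : Prop :=
  (b.1 = a.1 + 1 ∧ a.1 < n ∧ 2 ≤ F (a.1, a.2, b.2)) ∨
  (a.1 = b.1 + 1 ∧ a.1 ≤ n ∧ (b.2, a.2) ∈ P.G b.1)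

def ReachP (n : ℕ) (F : ℕ × Q × Q → ℕ) (k : ℕ) (w : ℕ × Q) : Prop :=
  ∃ p : ℕ → ℕ × Q, p 0 = (0, q0) ∧ p k = w ∧ ∀ i, i < k → Rres P n F (p i) (p (i+1))

lemma reach_zero (n : ℕ) (F : ℕ × Q × Q → ℕ) : ReachP P n F 0 (0, q0) :=
  ⟨fun _ => (0, q0), rfl, rfl, fun i hi => absurd hi (by omega)⟩

lemma reach_ext {n k : ℕ} {F : ℕ × Q × Q → ℕ} {v w : ℕ × Q}
    (h : ReachP P n F k v) (hstep : Rres P n F v w) : ReachP P n F (k+1) w := by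
  obtain ⟨p, hp0, hpk, hchain⟩ := h
  refine ⟨fun i => if i ≤ k then p i else w, by dsimp only; rw [if_pos (Nat.zero_le k)]; exact hp0,
    by dsimp only; rw [if_neg (by omega)], ?_⟩
  intro i hi
  dsimp only
  by_cases hik : i + 1 ≤ k
  · rw [if_pos (by omega), if_pos hik]
    exact hchain i (by omega)
  · have hi' : i = k := by omega
    subst hi'
    rw [if_pos le_rfl, if_neg (by omega), hpk]
    exact hstep

/-- The reduction lemma: if layer n is residual-reachable, the flow value can be lowered. -/
lemma reduce {n m : ℕ} {F : ℕ × Q × Q → ℕ} (hn : 1 ≤ n) (hm : 1 ≤ m)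
    (HF : HFlowTo P n m F) (hreach : ∃ k w, (w : ℕ × Q).1 = n ∧ ReachP P n F k w) :
    ∃ F', HFlowTo P n (m-1) F' := by
  classical
  obtain ⟨w, hw1, p, hp0, hpK, hchain⟩ := Nat.find_spec hreach
  set K := Nat.find hreach with hK
  -- injectivity of p on [0,K]
  have hinj : ∀ i1 i2, i1 < i2 → i2 ≤ K → p i1 ≠ p i2 := by
    intro i1 i2 h12 h2K heq
    have hlt : K - (i2 - i1) < K := by omega
    apply Nat.find_min hreach hlt
    refine ⟨w, hw1, (fun i => if i < i1 then p i else p (i + (i2 - i1))), ?_, ?_, ?_⟩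
    · dsimp only
      by_cases h0 : 0 < i1
      · rw [if_pos h0]; exact hp0
      · rw [if_neg h0]
        have h1 : i1 = 0 := by omega
        have h2 : 0 + (i2 - i1) = i2 := by omega
        rw [h2, ← heq, h1] at *
        exact hp0
    · dsimp only
      rw [if_neg (by omega)]
      have h2 : K - (i2 - i1) + (i2 - i1) = K := by omega
      rw [h2]
      exact hpK
    · intro i hi
      dsimp only
      by_cases ha : i + 1 < i1
      · rw [if_pos (by omega), if_pos ha]
        exact hchain i (by omega)
      · by_cases hb : i < i1
        · -- i + 1 = i1
          have hi1 : i + 1 = i1 := by omega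
          rw [if_pos hb, if_neg (by omega)]
          have h2 : i + 1 + (i2 - i1) = i2 := by omega
          rw [h2, ← heq, ← hi1]
          exact hchain i (by omega)
        · rw [if_neg hb, if_neg (by omega)]
          have h2 : i + (i2 - i1) + 1 = i + 1 + (i2 - i1) := by omega
          have := hchain (i + (i2 - i1)) (by omega)
          rwa [h2] at this
  -- inductive transfer of the deficit along p
  have main : ∀ i, i ≤ K → ∃ F'', DFlow P n (m-1) (p i) F'' ∧
      ∀ e : ℕ × Q × Q, (∀ a, a < i →
        ¬((p a = (e.1, e.2.1) ∧ p (a+1) = (e.1+1, e.2.2)) ∨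
          (p a = (e.1+1, e.2.2) ∧ p (a+1) = (e.1, e.2.1)))) → F'' e = F e := by
    intro i
    induction i with
    | zero =>
      intro _
      refine ⟨F, ?_, fun e _ => rfl⟩
      rw [hp0]
      exact hflow_dflow P hm HF
    | succ i ih =>
      intro hiK
      obtain ⟨F'', hdf, hagree⟩ := ih (by omega)
      have hstep := hchain i (by omega)
      rcases hstep with ⟨hfst, hlt, hF2⟩ | ⟨hfst, hle, hedge⟩
      · -- forward step
        have hpi : p i = ((p i).1, (p i).2) := rfl
        have hpi1 : p (i+1) = ((p i).1 + 1, (p (i+1)).2) := Prod.ext hfst rfl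
        have hnm : ∀ a, a < i →
            ¬((p a = ((p i).1, (p i).2) ∧ p (a+1) = ((p i).1+1, (p (i+1)).2)) ∨
              (p a = ((p i).1+1, (p (i+1)).2) ∧ p (a+1) = ((p i).1, (p i).2))) := by
          intro a ha hmatch
          rcases hmatch with ⟨h1, _⟩ | ⟨h1, _⟩
          · exact hinj a i (by omega) (by omega) (h1.trans hpi.symm)
          · exact hinj a (i+1) (by omega) (by omega) (h1.trans hpi1.symm)
        have hF''e : F'' ((p i).1, (p i).2, (p (i+1)).2) = F ((p i).1, (p i).2, (p (i+1)).2) :=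
          hagree _ hnm
        have hdf' : DFlow P n (m-1) ((p i).1, (p i).2) F'' := by rwa [← hpi]
        refine ⟨dec ((p i).1, (p i).2, (p (i+1)).2) F'', ?_, ?_⟩
        · rw [hpi1]
          exact dflow_fwd P hdf' hlt (by omega)
        · intro e he
          have hne : e ≠ ((p i).1, (p i).2, (p (i+1)).2) := by
            intro hh
            subst hh
            exact he i (by omega) (Or.inl ⟨hpi.symm, hpi1⟩)
          rw [dec, if_neg hne]
          exact hagree e (fun a ha => he a (by omega))
      · -- backward step
        have hpi : p i = ((p (i+1)).1 + 1, (p i).2) := Prod.ext hfst rfl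
        have hpi1 : p (i+1) = ((p (i+1)).1, (p (i+1)).2) := rfl
        have hdf' : DFlow P n (m-1) ((p (i+1)).1 + 1, (p i).2) F'' := by rwa [← hpi]
        refine ⟨inc ((p (i+1)).1, (p (i+1)).2, (p i).2) F'', ?_, ?_⟩
        · rw [hpi1]
          exact dflow_bwd P hdf' (by omega) hedge
        · intro e he
          have hne : e ≠ ((p (i+1)).1, (p (i+1)).2, (p i).2) := by
            intro hh
            subst hh
            exact he i (by omega) (Or.inr ⟨hpi, hpi1.symm⟩)
          rw [inc, if_neg hne]
          exact hagree e (fun a ha => he a (by omega))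
  obtain ⟨F'', hdf, _⟩ := main K le_rfl
  rw [hpK] at hdf
  have hw : w = ((n:ℕ), w.2) := Prod.ext hw1 rfl
  rw [hw] at hdf
  exact ⟨F'', dflow_hflow P hn hdf⟩

/-! ### the cut accumulator -/

def creach (n : ℕ) (F : ℕ × Q × Q → ℕ) (v : ℕ × Q) : Prop := ∃ k, ReachP P n F k v

lemma creach_q0 (n : ℕ) (F : ℕ × Q × Q → ℕ) : creach P n F (0, q0) :=
  ⟨0, reach_zero P n F⟩

lemma creach_fwd {n j : ℕ} {F : ℕ × Q × Q → ℕ} {q t : Q} (h : creach P n F (j,q))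
    (hj : j < n) (hF : 2 ≤ F (j,q,t)) : creach P n F (j+1, t) := by
  obtain ⟨k, hk⟩ := h
  exact ⟨k+1, reach_ext P hk (Or.inl ⟨rfl, hj, hF⟩)⟩

lemma creach_bwd {n j : ℕ} {F : ℕ × Q × Q → ℕ} {q t : Q} (h : creach P n F (j+1,t))
    (hj : j + 1 ≤ n) (he : (q,t) ∈ P.G j) : creach P n F (j, q) := by
  obtain ⟨k, hk⟩ := h
  exact ⟨k+1, reach_ext P hk (Or.inr ⟨rfl, hj, he⟩)⟩

def cutBase (n : ℕ) (F : ℕ × Q × Q → ℕ) (j : ℕ) : Set Q :=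
  {q | q ∈ P.S j ∧ ¬ creach P n F (j, q)}

def cutExt (n : ℕ) (F : ℕ × Q × Q → ℕ) : ℕ → Set Q
  | 0 => cutBase P n F n
  | (i+1) => {t | ∃ s ∈ cutExt n F i, (s,t) ∈ P.G (n+i)}

def cutT (n : ℕ) (F : ℕ × Q × Q → ℕ) (j : ℕ) : Set Q :=
  if j ≤ n then cutBase P n F j else cutExt P n F (j - n)

lemma cutT_of_le {n j : ℕ} {F : ℕ × Q × Q → ℕ} (h : j ≤ n) :
    cutT P n F j = cutBase P n F j := if_pos h

lemma cutExt_sub (n : ℕ) (F : ℕ × Q × Q → ℕ) : ∀ i, cutExt P n F i ⊆ P.S (n + i)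
  | 0 => by
    intro q hq
    exact hq.1
  | (i+1) => by
    intro t ht
    obtain ⟨s, _, hst⟩ := ht
    exact edge_right P hst

lemma cutT_acc (n : ℕ) (F : ℕ × Q × Q → ℕ) : IsAccumulator P.S P.G (cutT P n F) := by
  constructor
  · intro j
    by_cases hj : j ≤ n
    · rw [cutT_of_le P hj]
      intro q hq
      exact hq.1
    · rw [cutT, if_neg hj]
      intro q hq
      have := cutExt_sub P n F (j - n) hq
      have hj' : n + (j - n) = j := by omega
      rwa [hj'] at this
  · intro j s t hs hst
    by_cases hj : j + 1 ≤ n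
    · rw [cutT_of_le P (by omega)] at hs
      rw [cutT_of_le P hj]
      refine ⟨edge_right P hst, ?_⟩
      intro hr
      exact hs.2 (creach_bwd P hr hj hst)
    · by_cases hj0 : j ≤ n
      · -- j = n
        have hjn : j = n := by omega
        subst hjn
        rw [cutT, if_neg (by omega)]
        have h1 : j + 1 - j = 1 := by omega
        rw [h1]
        rw [cutT_of_le P le_rfl] at hs
        exact ⟨s, hs, by simpa using hst⟩
      · rw [cutT, if_neg hj0] at hs
        rw [cutT, if_neg (by omega)]
        have h1 : j + 1 - n = (j - n - 1) + 1 + 1 := by omega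
        have h2 : j - n = (j - n - 1) + 1 := by omega
        rw [h1]
        rw [h2] at hs
        refine ⟨s, hs, ?_⟩
        have h3 : n + ((j - n - 1) + 1) = j := by omega
        rwa [h3]

/-! ### the cut bound -/

set_option maxHeartbeats 1000000 in
lemma cut_bound {n m B : ℕ} {F : ℕ × Q × Q → ℕ} (hn : 1 ≤ n) (HF : HFlowTo P n m F)
    (hunreach : ∀ q : Q, ¬ creach P n F (n, q))
    (hB : ∀ T, IsAccumulator P.S P.G T → (Entries P.G T).encard ≤ B) :
    m ≤ B := by
  classical
  set T := cutT P n F with hT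
  set Tf : ℕ → Finset Q := fun j => Finset.univ.filter (· ∈ T j) with hTf
  set EntF : ℕ → Finset (Q × Q) := fun j =>
    (Finset.univ ×ˢ Finset.univ).filter
      (fun st => (st.1, st.2) ∈ P.G j ∧ ¬ st.1 ∈ T j ∧ st.2 ∈ T (j+1)) with hEntF
  have hcross : ∀ j, j < n → ∀ s t : Q, ¬ s ∈ T j → t ∈ T (j+1) →
      F (j,s,t) = if (s,t) ∈ P.G j then 1 else 0 := by
    intro j hj s t hs ht
    by_cases he : (s,t) ∈ P.G j
    · rw [if_pos he]
      have h1 := (HF.1 j hj s t).2 he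
      by_contra hne
      have h2 : 2 ≤ F (j,s,t) := by omega
      have hsS : s ∈ P.S j := edge_left P he
      have hreach_s : creach P n F (j, s) := by
        by_contra hrs
        exact hs (by rw [hT, cutT_of_le P (by omega)]; exact ⟨hsS, hrs⟩)
      have hrt := creach_fwd P hreach_s hj h2
      rw [hT, cutT_of_le P (by omega)] at ht
      exact ht.2 hrt
    · rw [if_neg he]
      by_contra hne
      exact he ((HF.1 j hj s t).1 (by omega))
  have hkey : ∀ j, j < n →
      ∑ t ∈ Tf (j+1), inF F j t = (∑ q ∈ Tf j, outF F j q) + (EntF j).card := by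
    intro j hj
    have hsplit : ∀ t : Q, inF F j t =
        (∑ s ∈ Finset.univ.filter (· ∈ T j), F (j,s,t)) +
        (∑ s ∈ Finset.univ.filter (fun s => ¬ s ∈ T j), F (j,s,t)) := by
      intro t
      rw [inF]
      exact (Finset.sum_filter_add_sum_filter_not Finset.univ (· ∈ T j) _).symm
    rw [show (∑ t ∈ Tf (j+1), inF F j t) = _ from Finset.sum_congr rfl (fun t _ => hsplit t),
      Finset.sum_add_distrib]
    congr 1
    · -- interior flow
      rw [Finset.sum_comm]
      apply Finset.sum_congr rfl
      intro s hsmem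
      rw [outF]
      apply Finset.sum_subset (Finset.filter_subset _ _)
      intro t _ htnot
      by_contra hpos
      have hpos' : 0 < F (j,s,t) := by omega
      have he := (HF.1 j hj s t).1 hpos'
      have hsT : s ∈ T j := (Finset.mem_filter.1 hsmem).2
      have := (cutT_acc P n F).2 j s t hsT he
      exact htnot (Finset.mem_filter.2 ⟨Finset.mem_univ t, this⟩)
    · -- crossing flow
      have hpt : ∀ t s : Q,
          (if t ∈ T (j+1) then (if s ∈ T j then 0 else F (j,s,t)) else 0)
          = (if (s,t) ∈ P.G j ∧ ¬ s ∈ T j ∧ t ∈ T (j+1) then 1 else 0) := by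
        intro t s
        by_cases ht : t ∈ T (j+1)
        · by_cases hs : s ∈ T j
          · rw [if_pos ht, if_pos hs, if_neg (by tauto)]
          · rw [if_pos ht, if_neg hs, hcross j hj s t hs ht]
            by_cases he : (s,t) ∈ P.G j
            · rw [if_pos he, if_pos ⟨he, hs, ht⟩]
            · rw [if_neg he, if_neg (by tauto)]
        · rw [if_neg ht, if_neg (by tauto)]
      calc ∑ t ∈ Tf (j+1), ∑ s ∈ Finset.univ.filter (fun s => ¬ s ∈ T j), F (j,s,t)
          = ∑ t ∈ Tf (j+1), ∑ s : Q, (if s ∈ T j then 0 else F (j,s,t)) := by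
            apply Finset.sum_congr rfl
            intro t _
            rw [Finset.sum_filter]
            apply Finset.sum_congr rfl
            intro s _
            rw [ite_not]
        _ = ∑ t : Q, (if t ∈ T (j+1) then ∑ s : Q, (if s ∈ T j then 0 else F (j,s,t)) else 0) := by
            rw [hTf]
            exact Finset.sum_filter _ _
        _ = ∑ t : Q, ∑ s : Q, (if t ∈ T (j+1) then (if s ∈ T j then 0 else F (j,s,t)) else 0) := by
            apply Finset.sum_congr rfl
            intro t _
            by_cases ht : t ∈ T (j+1)
            · rw [if_pos ht]
              apply Finset.sum_congr rfl
              intro s _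
              rw [if_pos ht]
            · rw [if_neg ht]
              rw [show (∑ s : Q, (if t ∈ T (j+1) then (if s ∈ T j then 0 else F (j,s,t)) else 0))
                  = ∑ s : Q, (0:ℕ) from Finset.sum_congr rfl (fun s _ => if_neg ht)]
              simp
        _ = ∑ t : Q, ∑ s : Q, (if (s,t) ∈ P.G j ∧ ¬ s ∈ T j ∧ t ∈ T (j+1) then 1 else 0) :=
            Finset.sum_congr rfl (fun t _ => Finset.sum_congr rfl (fun s _ => hpt t s))
        _ = (EntF j).card := by
            rw [hEntF, Finset.card_filter, Finset.sum_product]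
            exact Finset.sum_comm
  have hmass : ∀ j, j < n → ∑ q : Q, outF F j q = m := by
    intro j
    induction j with
    | zero =>
      intro _
      simp only [HF.2.1]
      simp
    | succ j ih =>
      intro hj
      rw [show (∑ q : Q, outF F (j+1) q) = ∑ q : Q, inF F j q from
        Finset.sum_congr rfl (fun q _ => HF.2.2 j hj q)]
      rw [show (∑ q : Q, inF F j q) = ∑ s : Q, outF F j s from by
        simp only [inF, outF]; exact Finset.sum_comm]
      exact ih (by omega)
  have hTf0 : Tf 0 = ∅ := by
    ext q
    simp only [hTf, Finset.mem_filter, Finset.mem_univ, true_and, Finset.notMem_empty, iff_false]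
    intro hq
    rw [hT, cutT_of_le P (Nat.zero_le n)] at hq
    obtain ⟨hq1, hq2⟩ := hq
    rw [P.init] at hq1
    rw [Set.mem_singleton_iff] at hq1
    subst hq1
    exact hq2 (creach_q0 P n F)
  have htel : ∀ j, j < n → ∑ t ∈ Tf (j+1), inF F j t = ∑ k ∈ Finset.range (j+1), (EntF k).card := by
    intro j
    induction j with
    | zero =>
      intro h0
      rw [hkey 0 h0, hTf0]
      simp
    | succ j ih =>
      intro hj
      rw [hkey (j+1) hj]
      rw [show (∑ q ∈ Tf (j+1), outF F (j+1) q) = ∑ q ∈ Tf (j+1), inF F j q from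
        Finset.sum_congr rfl (fun q _ => HF.2.2 j hj q)]
      rw [ih (by omega)]
      exact (Finset.sum_range_succ _ _).symm
  have hfin : ∑ t ∈ Tf n, inF F (n-1) t = m := by
    have h1 : Tf n = Finset.univ.filter (· ∈ P.S n) := by
      ext q
      simp only [hTf, Finset.mem_filter, Finset.mem_univ, true_and]
      rw [hT, cutT_of_le P le_rfl]
      exact ⟨fun h => h.1, fun h => ⟨h, hunreach q⟩⟩
    rw [h1]
    rw [show (∑ t ∈ Finset.univ.filter (· ∈ P.S n), inF F (n-1) t) = ∑ t : Q, inF F (n-1) t from by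
      apply Finset.sum_subset (Finset.filter_subset _ _)
      intro t _ ht
      rw [inF]
      apply Finset.sum_eq_zero
      intro s _
      by_contra hpos
      have he := (HF.1 (n-1) (by omega) s t).1 (by omega)
      have h2 : t ∈ P.S ((n-1)+1) := edge_right P he
      rw [(show (n-1)+1 = n by omega)] at h2
      exact ht (Finset.mem_filter.2 ⟨Finset.mem_univ t, h2⟩)]
    rw [show (∑ t : Q, inF F (n-1) t) = ∑ s : Q, outF F (n-1) s from by
      simp only [inF, outF]; exact Finset.sum_comm]
    exact hmass (n-1) (by omega)
  have hm_eq : m = ∑ k ∈ Finset.range n, (EntF k).card := by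
    have h4 := htel (n-1) (by omega)
    rw [(show (n-1)+1 = n by omega)] at h4
    rw [← hfin, h4]
  -- assemble the finite set of entries
  set Efin : Finset (ℕ × Q × Q) :=
    (Finset.range n).biUnion (fun j => (EntF j).image (fun st => (j, st.1, st.2))) with hEfin
  have hcard : Efin.card = ∑ k ∈ Finset.range n, (EntF k).card := by
    rw [hEfin, Finset.card_biUnion]
    · apply Finset.sum_congr rfl
      intro j _
      apply Finset.card_image_of_injective
      intro a b hab
      have h1 : a.1 = b.1 := congrArg (fun x => x.2.1) hab
      have h2 : a.2 = b.2 := congrArg (fun x => x.2.2) hab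
      exact Prod.ext h1 h2
    · intro x _ y _ hxy
      rw [Function.onFun, Finset.disjoint_left]
      intro e he1 he2
      rw [Finset.mem_image] at he1 he2
      obtain ⟨a, _, ha⟩ := he1
      obtain ⟨b, _, hb⟩ := he2
      exact hxy ((congrArg Prod.fst ha).trans (congrArg Prod.fst hb).symm)
  have hsub : (↑Efin : Set (ℕ × Q × Q)) ⊆ Entries P.G T := by
    intro e he
    rw [Finset.mem_coe, hEfin, Finset.mem_biUnion] at he
    obtain ⟨j, _, hmem⟩ := he
    rw [Finset.mem_image] at hmem
    obtain ⟨st, hst, rfl⟩ := hmem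
    rw [Finset.mem_filter] at hst
    exact ⟨hst.2.1, hst.2.2.1, hst.2.2.2⟩
  have hle : (Efin.card : ℕ∞) ≤ (B : ℕ∞) := by
    calc (Efin.card : ℕ∞) = (↑Efin : Set (ℕ × Q × Q)).encard :=
        (Set.encard_coe_eq_coe_finsetCard Efin).symm
    _ ≤ (Entries P.G T).encard := Set.encard_mono hsub
    _ ≤ B := hB T (cutT_acc P n F)
  have hfin2 : Efin.card ≤ B := by exact_mod_cast hle
  omega

/-! ### flows of value exactly B on every horizon -/

lemma exists_edge0 : ∃ t0 : Q, (q0, t0) ∈ P.G 0 := by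
  have : q0 ∈ P.S 0 := by rw [P.init]; rfl
  exact (mem_S_dom P).1 this

noncomputable def uniF : ℕ × Q × Q → ℕ :=
  fun x => if traj P (0, q0, (exists_edge0 P).choose) x.1 = x.2.1 ∧
      traj P (0, q0, (exists_edge0 P).choose) (x.1+1) = x.2.2 then 1 else 0

lemma uniF_edge : ((0:ℕ), q0, (exists_edge0 P).choose).2.1 = q0 := rfl

lemma uniF_traj_edge (k : ℕ) :
    (traj P (0, q0, (exists_edge0 P).choose) k, traj P (0, q0, (exists_edge0 P).choose) (k+1))
      ∈ P.G k :=
  traj_step P (by exact (exists_edge0 P).choose_spec) k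

lemma outF_uniF (j : ℕ) (q : Q) :
    outF (uniF P) j q = if traj P (0, q0, (exists_edge0 P).choose) j = q then 1 else 0 := by
  rw [outF]
  by_cases h : traj P (0, q0, (exists_edge0 P).choose) j = q
  · rw [if_pos h]
    rw [show (∑ t : Q, uniF P (j,q,t)) =
        ∑ t : Q, (if traj P (0, q0, (exists_edge0 P).choose) (j+1) = t then 1 else 0) from
      Finset.sum_congr rfl (fun t _ => by rw [uniF]; simp only [h, true_and])]
    simp
  · rw [if_neg h]
    apply Finset.sum_eq_zero
    intro t _
    rw [uniF, if_neg (fun hh => h hh.1)]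

lemma inF_uniF (j : ℕ) (q : Q) :
    inF (uniF P) j q = if traj P (0, q0, (exists_edge0 P).choose) (j+1) = q then 1 else 0 := by
  rw [inF]
  by_cases h : traj P (0, q0, (exists_edge0 P).choose) (j+1) = q
  · rw [if_pos h]
    rw [show (∑ s : Q, uniF P (j,s,q)) =
        ∑ s : Q, (if traj P (0, q0, (exists_edge0 P).choose) j = s then 1 else 0) from
      Finset.sum_congr rfl (fun s _ => by rw [uniF]; simp only [h, and_true])]
    simp
  · rw [if_neg h]
    apply Finset.sum_eq_zero
    intro s _
    rw [uniF, if_neg (fun hh => h hh.2)]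

lemma outF_add (F G : ℕ × Q × Q → ℕ) (j : ℕ) (q : Q) :
    outF (fun x => F x + G x) j q = outF F j q + outF G j q := by
  rw [outF, outF, outF]
  exact Finset.sum_add_distrib

lemma inF_add (F G : ℕ × Q × Q → ℕ) (j : ℕ) (q : Q) :
    inF (fun x => F x + G x) j q = inF F j q + inF G j q := by
  rw [inF, inF, inF]
  exact Finset.sum_add_distrib

lemma flow_add_unit {n m : ℕ} {F : ℕ × Q × Q → ℕ} (HF : HFlowTo P n m F) :
    HFlowTo P n (m+1) (fun x => F x + uniF P x) := by
  refine ⟨?_, ?_, ?_⟩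
  · intro j hj q t
    constructor
    · intro hpos
      have hpos' : 0 < F (j,q,t) + uniF P (j,q,t) := hpos
      by_cases hF : 0 < F (j,q,t)
      · exact (HF.1 j hj q t).1 hF
      · have : 0 < uniF P (j,q,t) := by omega
        rw [uniF] at this
        by_cases hc : traj P (0, q0, (exists_edge0 P).choose) j = q ∧
            traj P (0, q0, (exists_edge0 P).choose) (j+1) = t
        · rw [← hc.1, ← hc.2]
          exact uniF_traj_edge P j
        · rw [if_neg hc] at this; omega
    · intro hedge
      have := (HF.1 j hj q t).2 hedge
      show 1 ≤ F (j,q,t) + uniF P (j,q,t)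
      omega
  · intro q
    rw [outF_add, HF.2.1 q, outF_uniF, traj_zero P (by exact (exists_edge0 P).choose_spec)]
    by_cases hq : q = q0
    · subst hq; rw [if_pos rfl, if_pos rfl, if_pos rfl]
    · rw [if_neg hq, if_neg hq, if_neg (fun hh => hq hh.symm)]
  · intro j hj q
    rw [outF_add, inF_add, HF.2.2 j hj q, outF_uniF, inF_uniF]

lemma flow_value_le_B {B : ℕ} (hB : ∀ T, IsAccumulator P.S P.G T → (Entries P.G T).encard ≤ B)
    {n m : ℕ} (hn : 1 ≤ n) (HF : HFlowTo P n m F)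
    (hmin : ∀ m' F', HFlowTo P n m' F' → m ≤ m') : m ≤ B := by
  classical
  have hm1 : 1 ≤ m := by
    by_contra hm0
    have hm0' : m = 0 := by omega
    subst hm0'
    obtain ⟨t0, ht0⟩ := exists_edge0 P
    have h1 := (HF.1 0 (by omega) q0 t0).2 ht0
    have h2 := le_outF F 0 q0 t0
    rw [HF.2.1 q0, if_pos rfl] at h2
    omega
  by_cases hreach : ∃ k w, (w : ℕ × Q).1 = n ∧ ReachP P n F k w
  · obtain ⟨F', hF'⟩ := reduce P hn hm1 HF hreach
    have := hmin (m-1) F' hF'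
    omega
  · push_neg at hreach
    apply cut_bound P hn HF ?_ hB
    intro q ⟨k, hk⟩
    exact hreach k (n, q) rfl hk

lemma exists_flow_B {B : ℕ} (hB : ∀ T, IsAccumulator P.S P.G T → (Entries P.G T).encard ≤ B) :
    ∀ n, ∃ F, HFlowTo P n B F := by
  classical
  intro n
  -- first find a flow of minimal value
  have hex : ∃ m, ∃ F, HFlowTo P n m F := by
    obtain ⟨m, F, hF⟩ := feas_exists P n
    exact ⟨m, F, hF⟩
  set μ := Nat.find hex with hμ
  obtain ⟨F, hF⟩ := Nat.find_spec hex
  have hμB : μ ≤ B := by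
    rcases Nat.eq_zero_or_pos n with hn0 | hn1
    · subst hn0
      have : ∃ F, HFlowTo P 0 0 F := by
        refine ⟨fun x => 0, fun j hj => absurd hj (by omega), ?_, fun j hj => absurd hj (by omega)⟩
        intro q
        rw [outF]
        simp
      have h0 : μ ≤ 0 := Nat.find_le this
      omega
    · exact flow_value_le_B P hB hn1 hF
        (fun m' F' hF' => Nat.find_le ⟨F', hF'⟩)
  -- pump up to exactly B
  have hpump : ∀ k, ∃ F, HFlowTo P n (μ + k) F := by
    intro k
    induction k with
    | zero => exact ⟨F, hF⟩
    | succ k ih =>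
      obtain ⟨F', hF'⟩ := ih
      exact ⟨_, flow_add_unit P hF'⟩
  obtain ⟨F', hF'⟩ := hpump (B - μ)
  rw [(show μ + (B - μ) = B by omega)] at hF'
  exact ⟨F', hF'⟩

/-! ### limit: an infinite flow -/

def trunc (k : ℕ) (F : ℕ × Q × Q → ℕ) : ℕ × Q × Q → ℕ :=
  fun x => if x.1 < k then F x else 0

lemma trunc_eq {k : ℕ} {F : ℕ × Q × Q → ℕ} {x : ℕ × Q × Q} (h : x.1 < k) :
    trunc k F x = F x := if_pos h

lemma trunc_trunc {k K : ℕ} (h : k ≤ K) (F : ℕ × Q × Q → ℕ) :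
    trunc k (trunc K F) = trunc k F := by
  funext x
  by_cases hx : x.1 < k
  · rw [trunc_eq hx, trunc_eq hx, trunc_eq (by omega)]
  · rw [trunc, if_neg hx, trunc, if_neg hx]

lemma outF_congr_on {F1 F2 : ℕ × Q × Q → ℕ} {j : ℕ} {q : Q}
    (h : ∀ t, F1 (j,q,t) = F2 (j,q,t)) : outF F1 j q = outF F2 j q :=
  Finset.sum_congr rfl (fun t _ => h t)

lemma inF_congr_on {F1 F2 : ℕ × Q × Q → ℕ} {j : ℕ} {q : Q}
    (h : ∀ s, F1 (j,s,q) = F2 (j,s,q)) : inF F1 j q = inF F2 j q :=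
  Finset.sum_congr rfl (fun s _ => h s)

lemma trunc_flow {k K m : ℕ} (h : k ≤ K) (hk : 1 ≤ k) {F : ℕ × Q × Q → ℕ}
    (HF : HFlowTo P K m F) : HFlowTo P k m (trunc k F) := by
  refine ⟨?_, ?_, ?_⟩
  · intro j hj q t
    rw [show trunc k F (j,q,t) = F (j,q,t) from trunc_eq hj]
    exact HF.1 j (by omega) q t
  · intro q
    rw [outF_congr_on (fun t => trunc_eq (show ((0:ℕ),q,t).1 < k by omega))]
    exact HF.2.1 q
  · intro j hj q
    rw [outF_congr_on (fun t => trunc_eq (show ((j+1:ℕ),q,t).1 < k by omega)),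
      inF_congr_on (fun s => trunc_eq (show ((j:ℕ),s,q).1 < k by omega))]
    exact HF.2.2 j (by omega) q

def NFlow (B n : ℕ) (F : ℕ × Q × Q → ℕ) : Prop :=
  HFlowTo P (n+1) B F ∧ ∀ x : ℕ × Q × Q, n < x.1 → F x = 0

lemma nflow_nonempty {B : ℕ} (hB : ∀ T, IsAccumulator P.S P.G T → (Entries P.G T).encard ≤ B)
    (n : ℕ) : ∃ F, NFlow P B n F := by
  obtain ⟨F, hF⟩ := exists_flow_B P hB (n+1)
  refine ⟨trunc (n+1) F, trunc_flow P le_rfl (by omega) hF, ?_⟩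
  intro x hx
  rw [trunc, if_neg (by omega)]

lemma flow_mass {n m : ℕ} {F : ℕ × Q × Q → ℕ} (HF : HFlowTo P n m F) :
    ∀ j, j < n → ∑ q : Q, outF F j q = m := by
  intro j
  induction j with
  | zero =>
    intro _
    simp only [HF.2.1]
    simp
  | succ j ih =>
    intro hj
    rw [show (∑ q : Q, outF F (j+1) q) = ∑ q : Q, inF F j q from
      Finset.sum_congr rfl (fun q _ => HF.2.2 j hj q)]
    rw [show (∑ q : Q, inF F j q) = ∑ s : Q, outF F j s from by
      simp only [inF, outF]; exact Finset.sum_comm]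
    exact ih (by omega)

lemma flow_le {n m : ℕ} {F : ℕ × Q × Q → ℕ} (HF : HFlowTo P n m F)
    {x : ℕ × Q × Q} (hx : x.1 < n) : F x ≤ m := by
  have h1 : F x ≤ outF F x.1 x.2.1 := le_outF F x.1 x.2.1 x.2.2
  have h2 : outF F x.1 x.2.1 ≤ ∑ q : Q, outF F x.1 q :=
    Finset.single_le_sum (f := fun q => outF F x.1 q) (fun _ _ => Nat.zero_le _)
      (Finset.mem_univ _)
  rw [flow_mass P HF x.1 hx] at h2
  omega

lemma nflow_finite (B n : ℕ) : Finite {F : ℕ × Q × Q → ℕ // NFlow P B n F} := by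
  classical
  apply Finite.of_injective (f := fun (F : {F : ℕ × Q × Q → ℕ // NFlow P B n F})
    (i : Fin (n+1)) (q t : Q) => (⟨F.1 (i.1, q, t), by
      have := flow_le P F.2.1 (x := (i.1, q, t)) (by exact i.2)
      omega⟩ : Fin (B+1)))
  intro F1 F2 h
  apply Subtype.ext
  funext x
  by_cases hx : x.1 ≤ n
  · have h1 := congrFun (congrFun (congrFun h ⟨x.1, by omega⟩) x.2.1) x.2.2
    have h2 := congrArg Fin.val h1
    simpa using h2
  · rw [F1.2.2 x (by omega), F2.2.2 x (by omega)]

def GoodN (B n : ℕ) (F : ℕ × Q × Q → ℕ) : Prop :=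
  NFlow P B n F ∧ ∀ n', n ≤ n' → ∃ F', NFlow P B n' F' ∧ trunc (n+1) F' = F

lemma exists_good {B : ℕ} (hB : ∀ T, IsAccumulator P.S P.G T → (Entries P.G T).encard ≤ B)
    (n : ℕ) : ∃ F, GoodN P B n F := by
  classical
  by_contra hcon
  push_neg at hcon
  -- every normalized flow at level n has a failure level
  have hfail : ∀ FF : {F : ℕ × Q × Q → ℕ // NFlow P B n F},
      ∃ n', n ≤ n' ∧ ∀ F', ¬(NFlow P B n' F' ∧ trunc (n+1) F' = FF.1) := by
    intro FF
    have := hcon FF.1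
    rw [GoodN] at this
    push_neg at this
    obtain ⟨n', hn'1, hn'2⟩ := this FF.2
    exact ⟨n', hn'1, fun F' hF' => hn'2 F' hF'.1 hF'.2⟩
  choose ν hν1 hν2 using hfail
  have : Finite {F : ℕ × Q × Q → ℕ // NFlow P B n F} := nflow_finite P B n
  obtain ⟨N0, hN0⟩ := Set.Finite.bddAbove (Set.finite_range ν)
  set N := max n N0 with hN
  obtain ⟨H, hH⟩ := nflow_nonempty P hB N
  have hF0 : NFlow P B n (trunc (n+1) H) := by
    refine ⟨trunc_flow P (by omega) (by omega) hH.1, ?_⟩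
    intro x hx
    rw [trunc, if_neg (by omega)]
  set FF : {F : ℕ × Q × Q → ℕ // NFlow P B n F} := ⟨trunc (n+1) H, hF0⟩ with hFF
  have hn' : ν FF ≤ N0 := hN0 (Set.mem_range_self FF)
  apply hν2 FF (trunc (ν FF + 1) H)
  constructor
  · refine ⟨trunc_flow P (by omega) (by omega) hH.1, ?_⟩
    intro x hx
    rw [trunc, if_neg (by omega)]
  · rw [trunc_trunc (by have := hν1 FF; omega) H]

lemma good_step {B n : ℕ} {F : ℕ × Q × Q → ℕ} (h : GoodN P B n F) :
    ∃ F', GoodN P B (n+1) F' ∧ trunc (n+1) F' = F := by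
  classical
  by_contra hcon
  push_neg at hcon
  have hfail : ∀ FF : {F' : ℕ × Q × Q → ℕ // NFlow P B (n+1) F' ∧ trunc (n+1) F' = F},
      ∃ n', n+1 ≤ n' ∧ ∀ F'', ¬(NFlow P B n' F'' ∧ trunc (n+2) F'' = FF.1) := by
    intro FF
    have h1 := hcon FF.1
    have h2 : ¬ GoodN P B (n+1) FF.1 := fun hg => h1 hg FF.2.2
    rw [GoodN] at h2
    push_neg at h2
    obtain ⟨n', hn'1, hn'2⟩ := h2 FF.2.1
    exact ⟨n', hn'1, fun F'' hF'' => hn'2 F'' hF''.1 hF''.2⟩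
  choose ν hν1 hν2 using hfail
  have hfin : Finite {F' : ℕ × Q × Q → ℕ // NFlow P B (n+1) F' ∧ trunc (n+1) F' = F} := by
    have h1 : Finite {F' : ℕ × Q × Q → ℕ // NFlow P B (n+1) F'} := nflow_finite P B (n+1)
    apply Finite.of_injective
      (f := fun (FF : {F' : ℕ × Q × Q → ℕ // NFlow P B (n+1) F' ∧ trunc (n+1) F' = F}) =>
        (⟨FF.1, FF.2.1⟩ : {F' : ℕ × Q × Q → ℕ // NFlow P B (n+1) F'}))
    intro a b hab
    have h2 := congrArg (fun (z : {F' : ℕ × Q × Q → ℕ // NFlow P B (n+1) F'}) => z.1) hab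
    exact Subtype.ext h2
  obtain ⟨N0, hN0⟩ := Set.Finite.bddAbove (Set.finite_range ν)
  set N := max (n+1) N0 with hN
  obtain ⟨H, hH1, hH2⟩ := h.2 N (by omega)
  have hF'' : NFlow P B (n+1) (trunc (n+2) H) ∧ trunc (n+1) (trunc (n+2) H) = F := by
    refine ⟨⟨trunc_flow P (by omega) (by omega) hH1.1, ?_⟩, ?_⟩
    · intro x hx
      rw [trunc, if_neg (by omega)]
    · rw [trunc_trunc (by omega) H, hH2]
  set FF : {F' : ℕ × Q × Q → ℕ // NFlow P B (n+1) F' ∧ trunc (n+1) F' = F} :=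
    ⟨trunc (n+2) H, hF''⟩ with hFF
  have hn' : ν FF ≤ N0 := hN0 (Set.mem_range_self FF)
  apply hν2 FF (trunc (ν FF + 1) H)
  constructor
  · refine ⟨trunc_flow P (by omega) (by omega) hH1.1, ?_⟩
    intro x hx
    rw [trunc, if_neg (by omega)]
  · rw [trunc_trunc (by have := hν1 FF; omega) H]

def IFlow (B : ℕ) (F : ℕ × Q × Q → ℕ) : Prop :=
  (∀ j q t, (0 < F (j,q,t) → (q,t) ∈ P.G j) ∧ ((q,t) ∈ P.G j → 1 ≤ F (j,q,t))) ∧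
  (∀ q, outF F 0 q = if q = q0 then B else 0) ∧
  (∀ j q, outF F (j+1) q = inF F j q)

lemma exists_iflow {B : ℕ} (hB : ∀ T, IsAccumulator P.S P.G T → (Entries P.G T).encard ≤ B) :
    ∃ F, IFlow P B F := by
  classical
  -- the chain of good flows
  have hrec : ∀ n (F : ℕ × Q × Q → ℕ), GoodN P B n F →
      ∃ F', GoodN P B (n+1) F' ∧ trunc (n+1) F' = F := fun n F h => good_step P h
  let gch : (n : ℕ) → {F : ℕ × Q × Q → ℕ // GoodN P B n F} :=
    fun n => Nat.rec ⟨(exists_good P hB 0).choose, (exists_good P hB 0).choose_spec⟩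
      (fun n Fn => ⟨(hrec n Fn.1 Fn.2).choose, (hrec n Fn.1 Fn.2).choose_spec.1⟩) n
  have glink : ∀ n, trunc (n+1) (gch (n+1)).1 = (gch n).1 := by
    intro n
    exact (hrec n (gch n).1 (gch n).2).choose_spec.2
  -- agreement
  have hagree : ∀ n (x : ℕ × Q × Q), x.1 ≤ n → (gch n).1 x = (gch x.1).1 x := by
    intro n
    induction n with
    | zero =>
      intro x hx
      have : x.1 = 0 := by omega
      rw [this]
    | succ n ih =>
      intro x hx
      by_cases hx' : x.1 ≤ n
      · have h1 : (gch (n+1)).1 x = trunc (n+1) (gch (n+1)).1 x := (trunc_eq (by omega)).symm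
        rw [h1, glink n]
        exact ih x hx'
      · have : x.1 = n+1 := by omega
        rw [this]
  set Fi : ℕ × Q × Q → ℕ := fun x => (gch x.1).1 x with hFi
  refine ⟨Fi, ?_, ?_, ?_⟩
  · intro j q t
    have h1 : Fi (j,q,t) = (gch j).1 (j,q,t) := rfl
    rw [h1]
    exact (gch j).2.1.1.1 j (by omega) q t
  · intro q
    have h1 : outF Fi 0 q = outF (gch 0).1 0 q :=
      outF_congr_on (fun t => rfl)
    rw [h1]
    exact (gch 0).2.1.1.2.1 q
  · intro j q
    have h1 : outF Fi (j+1) q = outF (gch (j+1)).1 (j+1) q :=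
      outF_congr_on (fun t => rfl)
    have h2 : inF Fi j q = inF (gch (j+1)).1 j q :=
      inF_congr_on (fun s => (hagree (j+1) ((j:ℕ),s,q) (by omega)).symm)
    rw [h1, h2]
    exact (gch (j+1)).2.1.1.2.2 j (by omega) q

/-! ### decomposing a flow into tokens -/

lemma distrib {ι : Type} [DecidableEq ι] [DecidableEq Q] (d : Q) (s : Finset ι) (f : Q → ℕ)
    (hcard : s.card = ∑ t : Q, f t) :
    ∃ g : ι → Q, ∀ t : Q, (s.filter (fun i => g i = t)).card = f t := by
  classical
  have main : ∀ (u : Finset Q) (s : Finset ι), s.card = ∑ t ∈ u, f t →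
      ∃ g : ι → Q, (∀ i ∈ s, g i ∈ u) ∧ ∀ t ∈ u, (s.filter (fun i => g i = t)).card = f t := by
    intro u
    induction u using Finset.induction_on with
    | empty =>
      intro s hs
      have : s = ∅ := Finset.card_eq_zero.1 (by simpa using hs)
      subst this
      exact ⟨fun _ => d, fun i hi => absurd hi (Finset.notMem_empty i), fun t ht =>
        absurd ht (Finset.notMem_empty t)⟩
    | @insert t0 u ht0u ih =>
      intro s hs
      rw [Finset.sum_insert ht0u] at hs
      obtain ⟨s0, hs0sub, hs0card⟩ := Finset.exists_subset_card_eq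
        (show f t0 ≤ s.card by omega)
      have hrest : (s \ s0).card = ∑ t ∈ u, f t := by
        rw [Finset.card_sdiff_of_subset hs0sub]
        omega
      obtain ⟨g', hg'1, hg'2⟩ := ih (s \ s0) hrest
      refine ⟨fun i => if i ∈ s0 then t0 else g' i, ?_, ?_⟩
      · intro i hi
        dsimp only
        by_cases hi0 : i ∈ s0
        · rw [if_pos hi0]; exact Finset.mem_insert_self _ _
        · rw [if_neg hi0]
          exact Finset.mem_insert_of_mem (hg'1 i (Finset.mem_sdiff.2 ⟨hi, hi0⟩))
      · intro t ht
        rcases Finset.mem_insert.1 ht with ht0 | htu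
        · subst ht0
          have : s.filter (fun i => (if i ∈ s0 then t else g' i) = t) = s0 := by
            ext i
            rw [Finset.mem_filter]
            constructor
            · rintro ⟨hi, hgi⟩
              by_contra hi0
              rw [if_neg hi0] at hgi
              have := hg'1 i (Finset.mem_sdiff.2 ⟨hi, hi0⟩)
              rw [hgi] at this
              exact ht0u this
            · intro hi0
              exact ⟨hs0sub hi0, if_pos hi0⟩
          rw [this, hs0card]
        · have htne : t ≠ t0 := fun hh => ht0u (hh ▸ htu)
          have : s.filter (fun i => (if i ∈ s0 then t0 else g' i) = t)
              = (s \ s0).filter (fun i => g' i = t) := by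
            ext i
            rw [Finset.mem_filter, Finset.mem_filter, Finset.mem_sdiff]
            constructor
            · rintro ⟨hi, hgi⟩
              by_cases hi0 : i ∈ s0
              · rw [if_pos hi0] at hgi
                exact absurd hgi.symm htne
              · rw [if_neg hi0] at hgi
                exact ⟨⟨hi, hi0⟩, hgi⟩
            · rintro ⟨⟨hi, hi0⟩, hgi⟩
              exact ⟨hi, by rw [if_neg hi0]; exact hgi⟩
          rw [this, hg'2 t htu]
  obtain ⟨g, _, hg2⟩ := main Finset.univ s (by simpa using hcard)
  exact ⟨g, fun t => hg2 t (Finset.mem_univ t)⟩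

lemma step_exists {B : ℕ} {F : ℕ × Q × Q → ℕ} [DecidableEq Q] (hF : IFlow P B F) (j : ℕ)
    (ρj : Fin B → Q)
    (hρ : ∀ q, (Finset.univ.filter (fun i => ρj i = q)).card = outF F j q) :
    ∃ ρ' : Fin B → Q, ∀ q t,
      (Finset.univ.filter (fun i => ρj i = q ∧ ρ' i = t)).card = F (j,q,t) := by
  classical
  have hd : ∀ q : Q, ∃ g : Fin B → Q, ∀ t : Q,
      ((Finset.univ.filter (fun i => ρj i = q)).filter (fun i => g i = t)).card = F (j,q,t) := by
    intro q
    apply distrib q0 (Finset.univ.filter (fun i => ρj i = q)) (fun t => F (j,q,t))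
    rw [hρ q, outF]
  choose g hg using hd
  refine ⟨fun i => g (ρj i) i, ?_⟩
  intro q t
  have : Finset.univ.filter (fun i => ρj i = q ∧ g (ρj i) i = t)
      = (Finset.univ.filter (fun i => ρj i = q)).filter (fun i => g q i = t) := by
    rw [Finset.filter_filter]
    apply Finset.filter_congr
    intro i _
    constructor
    · rintro ⟨h1, h2⟩
      rw [h1] at h2
      exact ⟨h1, h2⟩
    · rintro ⟨h1, h2⟩
      exact ⟨h1, by rw [h1]; exact h2⟩
  rw [this, hg q t]

lemma iflow_realisable {B : ℕ} (hB1 : 1 ≤ B) {F : ℕ × Q × Q → ℕ} (hF : IFlow P B F) :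
    Realisable P := by
  classical
  -- counts propagate
  have counts_next : ∀ (j : ℕ) (ρj ρ' : Fin B → Q),
      (∀ q t, (Finset.univ.filter (fun i => ρj i = q ∧ ρ' i = t)).card = F (j,q,t)) →
      ∀ t, (Finset.univ.filter (fun i => ρ' i = t)).card = outF F (j+1) t := by
    intro j ρj ρ' hcert t
    rw [hF.2.2 j t, inF]
    rw [Finset.card_eq_sum_card_fiberwise (f := ρj) (t := Finset.univ)
      (fun x _ => Finset.mem_univ _)]
    apply Finset.sum_congr rfl
    intro q _
    rw [Finset.filter_filter, ← hcert q t]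
    congr 1
    apply Finset.filter_congr
    intro i _
    exact and_comm
  have hc0 : ∀ q : Q, (Finset.univ.filter (fun i : Fin B => (fun _ => q0) i = q)).card
      = outF F 0 q := by
    intro q
    rw [hF.2.1 q]
    by_cases hq : q = q0
    · subst hq
      simp
    · rw [if_neg hq]
      rw [Finset.card_eq_zero]
      apply Finset.filter_false_of_mem
      intro i _
      exact fun hh => hq hh.symm
  -- the step function
  have hstp : ∀ (j : ℕ)
      (c : {ρj : Fin B → Q // ∀ q, (Finset.univ.filter (fun i => ρj i = q)).card = outF F j q}),
      ∃ ρ' : Fin B → Q, ∀ q t,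
        (Finset.univ.filter (fun i => c.1 i = q ∧ ρ' i = t)).card = F (j,q,t) :=
    fun j c => step_exists P hF j c.1 c.2
  let stp : (j : ℕ) →
      {ρj : Fin B → Q // ∀ q, (Finset.univ.filter (fun i => ρj i = q)).card = outF F j q} →
      (Fin B → Q) := fun j c => (hstp j c).choose
  let seq : (j : ℕ) →
      {ρj : Fin B → Q // ∀ q, (Finset.univ.filter (fun i => ρj i = q)).card = outF F j q} :=
    fun j => Nat.rec ⟨fun _ => q0, hc0⟩
      (fun j c => ⟨stp j c, counts_next j c.1 (stp j c) (hstp j c).choose_spec⟩) j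
  have scert : ∀ j q t, (Finset.univ.filter
      (fun i => (seq j).1 i = q ∧ (seq (j+1)).1 i = t)).card = F (j,q,t) :=
    fun j => (hstp j (seq j)).choose_spec
  set ρ : ℕ → Fin B → Q := fun j => (seq j).1 with hρdef
  have hcount : ∀ j q, (Finset.univ.filter (fun i => ρ j i = q)).card = outF F j q :=
    fun j => (seq j).2
  -- membership facts
  have hedge_of : ∀ (nn : ℕ) (i : Fin B), (ρ nn i, ρ (nn+1) i) ∈ P.G nn := by
    intro nn i
    have hmem : i ∈ Finset.univ.filter
        (fun i' => ρ nn i' = ρ nn i ∧ ρ (nn+1) i' = ρ (nn+1) i) :=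
      Finset.mem_filter.2 ⟨Finset.mem_univ i, rfl, rfl⟩
    have hpos : 0 < F (nn, ρ nn i, ρ (nn+1) i) := by
      rw [← scert nn (ρ nn i) (ρ (nn+1) i)]
      exact Finset.card_pos.2 ⟨i, hmem⟩
    exact (hF.1 nn (ρ nn i) (ρ (nn+1) i)).1 hpos
  refine ⟨B, ρ, P.act, ⟨rfl, ?_⟩, ?_, fun n => rfl, ?_⟩
  · intro nn i
    exact P.compat nn _ (hedge_of nn i)
  · -- supports
    intro nn
    ext q
    constructor
    · intro hq
      obtain ⟨t, ht⟩ := (mem_S_dom P).1 hq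
      have h1 : 1 ≤ F (nn, q, t) := (hF.1 nn q t).2 ht
      have h2 : 0 < outF F nn q := by
        have := le_outF F nn q t
        omega
      rw [← hcount nn q] at h2
      obtain ⟨i, hi⟩ := Finset.card_pos.1 h2
      exact ⟨i, (Finset.mem_filter.1 hi).2⟩
    · rintro ⟨i, rfl⟩
      have := hedge_of nn i
      exact edge_left P this
  · -- transfer graphs
    intro nn
    ext p
    constructor
    · intro hp
      have h1 : 1 ≤ F (nn, p.1, p.2) := (hF.1 nn p.1 p.2).2 (by exact hp)
      have h2 : 0 < (Finset.univ.filter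
          (fun i => ρ nn i = p.1 ∧ ρ (nn+1) i = p.2)).card := by
        rw [scert nn p.1 p.2]
        omega
      obtain ⟨i, hi⟩ := Finset.card_pos.1 h2
      exact ⟨i, (Finset.mem_filter.1 hi).2⟩
    · rintro ⟨i, h1, h2⟩
      have heq : ((ρ nn i, ρ (nn+1) i) : Q × Q) = p := Prod.ext h1 h2
      rw [← heq]
      exact hedge_of nn i

lemma capacity_pos {B : ℕ}
    (hB : ∀ T, IsAccumulator P.S P.G T → (Entries P.G T).encard ≤ B) : 1 ≤ B := by
  classical
  set T : ℕ → Set Q := fun j => if j = 0 then (∅ : Set Q) else P.S j with hT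
  have hacc : IsAccumulator P.S P.G T := by
    constructor
    · intro j
      by_cases hj : j = 0
      · subst hj; rw [hT]; simp
      · rw [hT]; simp [hj]
    · intro j s t _ hst
      have : T (j+1) = P.S (j+1) := by rw [hT]; simp
      rw [this]
      exact edge_right P hst
  obtain ⟨t0, ht0⟩ := exists_edge0 P
  have hmem : ((0:ℕ), q0, t0) ∈ Entries P.G T := by
    refine ⟨ht0, ?_, ?_⟩
    · rw [hT]; simp
    · have : T 1 = P.S 1 := by rw [hT]; simp
      rw [this]
      exact edge_right P ht0
  have h1 : (1 : ℕ∞) ≤ (Entries P.G T).encard :=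
    Set.one_le_encard_iff_nonempty.2 ⟨_, hmem⟩
  have h2 := hB T hacc
  have : (1 : ℕ∞) ≤ (B : ℕ∞) := le_trans h1 h2
  exact_mod_cast this

end Hard

/-- A play in the support arena is realisable iff it has bounded capacity. -/
theorem stmt3 [Fintype Q] (Δ : Q → A → Q → Prop) (q0 : Q) (hc : Complete Δ)
    (P : SupportPlay Δ q0) :
    Realisable P ↔ BoundedCapacity P := by
  constructor
  · exact realisable_boundedCapacity P
  · rintro ⟨B, hB⟩
    obtain ⟨F, hF⟩ := exists_iflow P hB
    exact iflow_realisable P (capacity_pos P hB) hF
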